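/- Let N ≥ 2 be an integer and let A ⊆ {1, …, N} be nonempty. Then there exist an integer ℓ with 1 ≤ ℓ ≤ ⌈2·N·log₂ N / |A|⌉ and integers t_1, …, t_ℓ ∈ {−N, …, N} such that {1, …, N} ⊆ ∪_{i=1}^ℓ (t_i + A), where t + A = { t + a : a ∈ A }. -/

import Mathlib

lemma step9 (N : ℕ) (A : Finset ℤ) (hA : A ⊆ Finset.Icc 1 (N:ℤ))
    (R : Finset ℤ) (hR : R ⊆ Finset.Icc 1 (N:ℤ)) :
    ∃ t ∈ Finset.Icc (-(N:ℤ)) (N:ℤ),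
      A.card * R.card ≤ (2*N+1) * (R ∩ A.image (fun a => t + a)).card := by
  set S := Finset.Icc (-(N:ℤ)) (N:ℤ) with hS
  have hScard : S.card = 2*N+1 := by
    rw [hS, Int.card_Icc]
    omega
  have hSne : S.Nonempty := by
    refine ⟨0, ?_⟩
    simp [hS]
  have key : ∀ r ∈ R, S.filter (fun t => r ∈ A.image (fun a => t + a)) =
      A.image (fun a => r - a) := by
    intro r hr
    ext t
    simp only [Finset.mem_filter, Finset.mem_image]
    constructor
    · rintro ⟨-, a, ha, hta⟩
      exact ⟨a, ha, by omega⟩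
    · rintro ⟨a, ha, hta⟩
      have h1 := hA ha
      have h2 := hR hr
      simp only [Finset.mem_Icc] at h1 h2
      refine ⟨?_, a, ha, by omega⟩
      simp only [hS, Finset.mem_Icc]
      omega
  have hsum : ∑ t ∈ S, (R ∩ A.image (fun a => t + a)).card = R.card * A.card := by
    have : ∀ t, (R ∩ A.image (fun a => t + a)).card =
        ∑ r ∈ R, if r ∈ A.image (fun a => t + a) then 1 else 0 := by
      intro t
      rw [← Finset.filter_mem_eq_inter, Finset.card_filter]
    simp_rw [this]
    rw [Finset.sum_comm]
    have : ∀ r ∈ R, ∑ t ∈ S, (if r ∈ A.image (fun a => t + a) then 1 else 0) = A.card := by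
      intro r hr
      rw [← Finset.card_filter, key r hr]
      rw [Finset.card_image_of_injective _ (fun x y h => by omega)]
    rw [Finset.sum_congr rfl this, Finset.sum_const, smul_eq_mul]
  have htot : ∑ _t ∈ S, A.card * R.card ≤
      ∑ t ∈ S, (2*N+1) * (R ∩ A.image (fun a => t + a)).card := by
    rw [Finset.sum_const, ← Finset.mul_sum, hsum, hScard, smul_eq_mul]
    ring_nf
    omega
  obtain ⟨t, ht, hle⟩ := Finset.exists_le_of_sum_le hSne htot
  exact ⟨t, ht, hle⟩

lemma iter9 (N : ℕ) (hN : 2 ≤ N) (A : Finset ℤ) (hA : A ⊆ Finset.Icc 1 (N:ℤ)) :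
    ∀ (k : ℕ) (R : Finset ℤ), R ⊆ Finset.Icc 1 (N:ℤ) →
    ∃ t : Fin k → ℤ, (∀ i, t i ∈ Finset.Icc (-(N:ℤ)) (N:ℤ)) ∧
      ((R.filter (fun x => ¬ ∃ i, ∃ b ∈ A, x = t i + b)).card : ℝ) ≤
        (R.card : ℝ) * (1 - (A.card : ℝ)/(2*↑N+1))^k := by
  have haN : A.card ≤ N := by
    have := Finset.card_le_card hA
    rwa [Int.card_Icc, show ((N:ℤ) + 1 - 1).toNat = N by omega] at this
  have hdelta : (0:ℝ) ≤ 1 - (A.card : ℝ)/(2*↑N+1) := by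
    have h1 : (A.card : ℝ) ≤ N := by exact_mod_cast haN
    have h2 : (0:ℝ) < 2*↑N+1 := by positivity
    rw [sub_nonneg, div_le_one h2]
    have : (0:ℝ) ≤ (N:ℝ) := by positivity
    linarith
  intro k
  induction k with
  | zero =>
    intro R hR
    refine ⟨fun i => i.elim0, fun i => i.elim0, ?_⟩
    have : R.filter (fun x => ¬ ∃ i : Fin 0, ∃ b ∈ A, x = i.elim0 + b) = R :=
      Finset.filter_true_of_mem (fun x _ => by simp)
    rw [this, pow_zero, mul_one]
  | succ k ih =>
    intro R hR
    obtain ⟨t0, ht0, hcov⟩ := step9 N A hA R hR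
    set T := A.image (fun a => t0 + a) with hT
    set R' := R \ T with hR'
    have hR'sub : R' ⊆ Finset.Icc 1 (N:ℤ) := (Finset.sdiff_subset).trans hR
    obtain ⟨t', ht'mem, ht'bound⟩ := ih R' hR'sub
    set tt : Fin (k+1) → ℤ := Fin.cons t0 t' with htt
    refine ⟨tt, ?_, ?_⟩
    · intro i
      refine Fin.cases ?_ ?_ i
      · simpa [htt] using ht0
      · intro j; simpa [htt] using ht'mem j
    · have hsubset : R.filter (fun x => ¬ ∃ i : Fin (k+1), ∃ b ∈ A, x = tt i + b) ⊆
          R'.filter (fun x => ¬ ∃ i : Fin k, ∃ b ∈ A, x = t' i + b) := by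
        intro x hx
        simp only [Finset.mem_filter] at hx ⊢
        obtain ⟨hxR, hxn⟩ := hx
        constructor
        · rw [hR', Finset.mem_sdiff]
          refine ⟨hxR, fun hxT => ?_⟩
          rw [hT] at hxT
          simp only [Finset.mem_image] at hxT
          obtain ⟨b, hb, hxb⟩ := hxT
          exact hxn ⟨0, b, hb, by rw [htt, Fin.cons_zero]; omega⟩
        · rintro ⟨i, b, hb, hxb⟩
          exact hxn ⟨i.succ, b, hb, by rwa [htt, Fin.cons_succ]⟩
      have hcard : ((R.filter (fun x => ¬ ∃ i : Fin (k+1), ∃ b ∈ A, x = tt i + b)).card : ℝ)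
          ≤ ((R'.filter (fun x => ¬ ∃ i : Fin k, ∃ b ∈ A, x = t' i + b)).card : ℝ) := by
        exact_mod_cast Finset.card_le_card hsubset
      have hR'card : ((R'.card : ℝ)) ≤ (R.card : ℝ) * (1 - (A.card : ℝ)/(2*↑N+1)) := by
        have h1 : (R ∩ T).card + (R \ T).card = R.card := Finset.card_inter_add_card_sdiff R T
        have h2 : (A.card : ℝ) * R.card ≤ (2*↑N+1) * ((R ∩ T).card : ℝ) := by
          exact_mod_cast hcov
        have h3 : (0:ℝ) < 2*↑N+1 := by positivity
        have h4 : ((R':Finset ℤ).card : ℝ) = (R.card : ℝ) - ((R ∩ T).card : ℝ) := by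
          rw [hR']
          push_cast [← h1]
          ring
        rw [h4]
        rw [mul_sub, mul_one]
        have : (A.card : ℝ) * R.card / (2*↑N+1) ≤ ((R ∩ T).card : ℝ) :=
          (div_le_iff₀ h3).mpr (by linarith)
        have heq : (R.card:ℝ) * ((A.card : ℝ)/(2*↑N+1)) = (A.card : ℝ) * R.card / (2*↑N+1) := by
          ring
        rw [heq]
        linarith
      calc ((R.filter (fun x => ¬ ∃ i : Fin (k+1), ∃ b ∈ A, x = tt i + b)).card : ℝ)
          ≤ ((R'.filter (fun x => ¬ ∃ i : Fin k, ∃ b ∈ A, x = t' i + b)).card : ℝ) := hcard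
        _ ≤ (R'.card : ℝ) * (1 - (A.card : ℝ)/(2*↑N+1))^k := ht'bound
        _ ≤ ((R.card : ℝ) * (1 - (A.card : ℝ)/(2*↑N+1))) * (1 - (A.card : ℝ)/(2*↑N+1))^k := by
            apply mul_le_mul_of_nonneg_right hR'card (pow_nonneg hdelta k)
        _ = (R.card : ℝ) * (1 - (A.card : ℝ)/(2*↑N+1))^(k+1) := by ring

/-- any nonempty `A ⊆ {1, …, N}` has at most `⌈2·N·log₂ N / |A|⌉`
translates, with shifts in `{-N, …, N}`, covering `{1, …, N}`. -/
theorem stmt9 (N : ℕ) (hN : 2 ≤ N) (A : Finset ℤ)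
    (hA : A ⊆ Finset.Icc 1 (N : ℤ)) (hne : A.Nonempty) :
    ∃ (ℓ : ℕ) (t : Fin ℓ → ℤ), 1 ≤ ℓ ∧
      (ℓ : ℤ) ≤ ⌈(2 * (N : ℝ) * Real.logb 2 N) / (A.card : ℝ)⌉ ∧
      (∀ i, t i ∈ Finset.Icc (-(N : ℤ)) (N : ℤ)) ∧
      (∀ x ∈ Finset.Icc (1 : ℤ) (N : ℤ), ∃ i, ∃ a ∈ A, x = t i + a) := by
  have ha1 : 1 ≤ A.card := hne.card_pos
  have haN : A.card ≤ N := by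
    have := Finset.card_le_card hA
    rwa [Int.card_Icc, show ((N:ℤ) + 1 - 1).toNat = N by omega] at this
  have hNR : (2:ℝ) ≤ (N:ℝ) := by exact_mod_cast hN
  have hN1 : (1:ℝ) < (N:ℝ) := by linarith
  have haR : (1:ℝ) ≤ (A.card:ℝ) := by exact_mod_cast ha1
  have haNR : (A.card:ℝ) ≤ (N:ℝ) := by exact_mod_cast haN
  have hlogb : 0 < Real.logb 2 (N:ℝ) := Real.logb_pos one_lt_two hN1
  set c : ℝ := (2 * (N : ℝ) * Real.logb 2 N) / (A.card : ℝ) with hc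
  have hcpos : 0 < c := by
    apply div_pos _ (by linarith)
    have : (0:ℝ) < (N:ℝ) := by linarith
    positivity
  have hceil1 : 1 ≤ ⌈c⌉ := Int.ceil_pos.mpr hcpos
  set ℓ : ℕ := ⌈c⌉.toNat with hl
  have hlZ : (ℓ : ℤ) = ⌈c⌉ := Int.toNat_of_nonneg (by omega)
  have hlc : c ≤ (ℓ : ℝ) := by
    have h1 := Int.le_ceil c
    have h2 : ((⌈c⌉ : ℤ) : ℝ) = (ℓ : ℝ) := by exact_mod_cast hlZ.symm
    linarith
  obtain ⟨t, htmem, htbound⟩ := iter9 N hN A hA ℓ (Finset.Icc 1 (N:ℤ)) subset_rfl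
  refine ⟨ℓ, t, by omega, by omega, htmem, ?_⟩
  -- show the leftover is empty
  set δ : ℝ := (A.card : ℝ)/(2*↑N+1) with hδ
  have hδpos : 0 < δ := by
    apply div_pos (by linarith) (by linarith)
  have hδ1 : δ ≤ 1 := by
    rw [hδ, div_le_one (by linarith)]
    linarith
  have hexp : 1 - δ ≤ Real.exp (-δ) := by
    have := Real.add_one_le_exp (-δ)
    linarith
  have hpow : (1 - δ)^ℓ ≤ Real.exp (-(δ * ℓ)) := by
    calc (1 - δ)^ℓ ≤ (Real.exp (-δ))^ℓ := pow_le_pow_left₀ (by linarith) hexp ℓ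
      _ = Real.exp ((ℓ:ℝ) * (-δ)) := by rw [← Real.exp_nat_mul]
      _ = Real.exp (-(δ * ℓ)) := by ring_nf
  have hlog2 : Real.log 2 < 0.6931471808 := Real.log_two_lt_d9
  have hlog2pos : 0 < Real.log 2 := Real.log_pos one_lt_two
  have hlogNpos : 0 < Real.log (N:ℝ) := Real.log_pos hN1
  have hkey : Real.log (N:ℝ) < δ * ℓ := by
    have hδc : δ * c = 2 * (N:ℝ) * Real.log (N:ℝ) / ((2*↑N+1) * Real.log 2) := by
      rw [hδ, hc, Real.logb]
      field_simp
    have h2 : Real.log (N:ℝ) < δ * c := by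
      rw [hδc, lt_div_iff₀ (by positivity)]
      have hstep : (2*(N:ℝ)+1) * Real.log 2 < 2*(N:ℝ) := by nlinarith
      nlinarith [mul_lt_mul_of_pos_left hstep hlogNpos]
    have h3 : δ * c ≤ δ * ℓ := mul_le_mul_of_nonneg_left hlc (le_of_lt hδpos)
    linarith
  have hlt : (N:ℝ) * (1 - δ)^ℓ < 1 := by
    have h1 : Real.exp (-(δ * ℓ)) < Real.exp (-(Real.log (N:ℝ))) :=
      Real.exp_lt_exp.mpr (by linarith)
    have h2 : Real.exp (-(Real.log (N:ℝ))) = 1 / (N:ℝ) := by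
      rw [Real.exp_neg, Real.exp_log (by linarith)]
      ring
    have h3 : (1 - δ)^ℓ < 1 / (N:ℝ) := lt_of_le_of_lt hpow (by rw [← h2]; exact h1)
    have h4 : (0:ℝ) < (N:ℝ) := by linarith
    calc (N:ℝ) * (1 - δ)^ℓ < (N:ℝ) * (1/(N:ℝ)) := by
          exact mul_lt_mul_of_pos_left h3 h4
      _ = 1 := by field_simp
  have hIcc : ((Finset.Icc (1:ℤ) (N:ℤ)).card : ℝ) = (N:ℝ) := by
    rw [Int.card_Icc, show ((N:ℤ) + 1 - 1).toNat = N by omega]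
  have hcard0 : ((Finset.Icc (1:ℤ) (N:ℤ)).filter
      (fun x => ¬ ∃ i, ∃ b ∈ A, x = t i + b)).card = 0 := by
    have : (((Finset.Icc (1:ℤ) (N:ℤ)).filter
        (fun x => ¬ ∃ i, ∃ b ∈ A, x = t i + b)).card : ℝ) < 1 := by
      calc _ ≤ ((Finset.Icc (1:ℤ) (N:ℤ)).card : ℝ) * (1 - δ)^ℓ := htbound
        _ = (N:ℝ) * (1 - δ)^ℓ := by rw [hIcc]
        _ < 1 := hlt
    exact_mod_cast Nat.lt_one_iff.mp (by exact_mod_cast this)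
  intro x hx
  rw [Finset.card_eq_zero, Finset.filter_eq_empty_iff] at hcard0
  have := hcard0 hx
  push_neg at this
  simpa using not_not.mp (by simpa using hcard0 hx)
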